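/- Let (r_j)_{j ∈ ℕ} be a strictly decreasing sequence of positive real numbers with r_j → 0, let (b_j)_{j ∈ ℕ} be real numbers and N ∈ ℕ such that the series Σ_j |b_j| r_j^N converges. If Σ_{j ∈ ℕ} b_j r_j^n = 0 for every integer n ≥ N, then b_j = 0 for every j. In particular, if r_0 = 1 and Σ_{j ∈ ℕ} b_j r_j^n = e for every n ≥ N (with e ∈ ℝ a constant), then b_0 = e and b_j = 0 for all j ≥ 1. -/

import Mathlib

open Filter Topology

lemma dirichlet_vanish_aux
    (r b : ℕ → ℝ) (N : ℕ)
    (hr_anti : StrictAnti r) (hr_pos : ∀ j, 0 < r j)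
    (hsum : Summable fun j => |b j| * r j ^ N)
    (h0 : ∀ n : ℕ, N ≤ n → ∑' j : ℕ, b j * r j ^ n = 0) :
    ∀ j, b j = 0 := by
  intro j
  induction j using Nat.strong_induction_on with
  | _ j ih =>
  have hrj : 0 < r j := hr_pos j
  have hrjN : (0:ℝ) < r j ^ N := pow_pos hrj N
  -- bound function
  have hsum' : Summable (fun i => |b i| * (r i / r j) ^ N) := by
    have h := hsum.mul_right ((r j ^ N)⁻¹)
    refine h.congr fun i => ?_
    rw [div_pow]
    field_simp
  -- zero values of the sums
  have hzero : ∀ m : ℕ, ∑' i, b i * (r i / r j) ^ (N + m) = 0 := by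
    intro m
    have : (fun i => b i * (r i / r j) ^ (N + m))
        = fun i => (b i * r i ^ (N + m)) * ((r j ^ (N + m))⁻¹) := by
      funext i; rw [div_pow]; field_simp
    rw [this, tsum_mul_right, h0 (N + m) (Nat.le_add_right _ _), zero_mul]
  -- limits
  set g : ℕ → ℝ := fun i => if i = j then b j else 0 with hg
  have hlim : ∀ i, Tendsto (fun m : ℕ => b i * (r i / r j) ^ (N + m)) atTop (𝓝 (g i)) := by
    intro i
    rcases lt_trichotomy i j with h | h | h
    · simp [hg, Nat.ne_of_lt h, ih i h]
    · subst h
      simp [hg, div_self hrj.ne']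
    · have hpos : 0 ≤ r i / r j := (div_pos (hr_pos i) hrj).le
      have hlt : r i / r j < 1 := (div_lt_one hrj).2 (hr_anti h)
      have h1 : Tendsto (fun m : ℕ => (r i / r j) ^ (N + m)) atTop (𝓝 0) := by
        have := (tendsto_pow_atTop_nhds_zero_of_lt_one hpos hlt).comp
          (tendsto_add_atTop_nat N)
        simpa [Function.comp_def, Nat.add_comm] using this
      have := h1.const_mul (b i)
      simpa [hg, Nat.ne_of_gt h] using this
  have hbound : ∀ m : ℕ, ∀ i, ‖b i * (r i / r j) ^ (N + m)‖ ≤ |b i| * (r i / r j) ^ N := by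
    intro m i
    rcases lt_trichotomy i j with h | h | h
    · simp [ih i h]
    · subst h; simp [div_self hrj.ne']
    · have hpos : 0 ≤ r i / r j := (div_pos (hr_pos i) hrj).le
      have hlt : r i / r j < 1 := (div_lt_one hrj).2 (hr_anti h)
      rw [norm_mul, Real.norm_eq_abs, Real.norm_eq_abs,
        abs_pow, abs_of_nonneg hpos]
      exact mul_le_mul_of_nonneg_left
        (pow_le_pow_of_le_one hpos hlt.le (Nat.le_add_right _ _)) (abs_nonneg _)
  have hmain : Tendsto (fun m : ℕ => ∑' i, b i * (r i / r j) ^ (N + m)) atTop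
      (𝓝 (∑' i, g i)) :=
    tendsto_tsum_of_dominated_convergence hsum' hlim (Eventually.of_forall hbound)
  have hgt : ∑' i, g i = b j := tsum_ite_eq j (fun _ => b j)
  have h2 := tendsto_nhds_unique (hmain.congr hzero) tendsto_const_nhds
  rw [hgt] at h2
  exact h2

/-- vanishing principle for generalized Dirichlet-type series.  Let
`(r_j)` be a strictly decreasing sequence of positive reals with `r_j → 0`, `(b_j)` reals and
`N ∈ ℕ` with `Σ_j |b_j| r_j^N < ∞`.  If `Σ_j b_j r_j^n = 0` for every `n ≥ N` then all
`b_j = 0`.  In particular, if `r_0 = 1` and `Σ_j b_j r_j^n = e` for every `n ≥ N`, then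
`b_0 = e` and `b_j = 0` for all `j ≥ 1`. -/
theorem dirichlet_series_vanishing
    (r b : ℕ → ℝ) (N : ℕ)
    (hr_anti : StrictAnti r) (hr_pos : ∀ j, 0 < r j)
    (hr_lim : Tendsto r atTop (𝓝 0))
    (hsum : Summable fun j => |b j| * r j ^ N) :
    ((∀ n : ℕ, N ≤ n → ∑' j : ℕ, b j * r j ^ n = 0) → ∀ j, b j = 0) ∧
    (∀ e : ℝ, r 0 = 1 → (∀ n : ℕ, N ≤ n → ∑' j : ℕ, b j * r j ^ n = e) →
      b 0 = e ∧ ∀ j : ℕ, 1 ≤ j → b j = 0) := by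
  constructor
  · exact fun h => dirichlet_vanish_aux r b N hr_anti hr_pos hsum h
  · intro e hr0 he
    -- modified coefficients
    set d : ℕ → ℝ := fun j => if j = 0 then e else 0 with hd
    set c : ℕ → ℝ := fun j => b j - d j with hc
    have hd_summ : ∀ f : ℕ → ℝ, Summable (fun j => (if j = 0 then f 0 else 0)) := by
      intro f
      refine summable_of_ne_finset_zero (s := {0}) fun i hi => ?_
      simp only [Finset.mem_singleton] at hi
      simp [hi]
    have hcsum : Summable fun j => |c j| * r j ^ N := by
      have h2 : Summable fun j : ℕ => ((if j = 0 then |e| else 0) * r j ^ N) := by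
        refine summable_of_ne_finset_zero (s := {0}) fun i hi => ?_
        simp only [Finset.mem_singleton] at hi
        simp [hi]
      have h1 : Summable fun j => (|b j| + (if j = 0 then |e| else 0)) * r j ^ N := by
        refine (hsum.add h2).congr fun j => ?_
        ring
      refine h1.of_nonneg_of_le (fun j => ?_) fun j => ?_
      · exact mul_nonneg (abs_nonneg _) (pow_nonneg (hr_pos j).le _)
      refine mul_le_mul_of_nonneg_right ?_ (pow_nonneg (hr_pos j).le _)
      calc |c j| ≤ |b j| + |d j| := by rw [hc]; exact abs_sub _ _
        _ = |b j| + (if j = 0 then |e| else 0) := by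
            by_cases hj : j = 0 <;> simp [hd, hj]
    have hdsum_n : ∀ n : ℕ, Summable fun j => d j * r j ^ n := by
      intro n
      exact (hd_summ fun _ => e * r 0 ^ n).congr fun j => by
        by_cases hj : j = 0 <;> simp [hd, hj]
    have hbsum_n : ∀ n : ℕ, N ≤ n → Summable fun j => b j * r j ^ n := by
      intro n hn
      have hb : Summable fun j => (|b j| * r j ^ N) * r 0 ^ (n - N) :=
        hsum.mul_right _
      refine (hb.of_norm_bounded fun j => ?_)
      have h1 : r j ≤ r 0 := hr_anti.antitone (Nat.zero_le j)
      have h2 : r j ^ n = r j ^ N * r j ^ (n - N) := by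
        rw [← pow_add]; congr 1; omega
      rw [Real.norm_eq_abs, abs_mul, abs_pow, abs_of_nonneg (hr_pos j).le, h2,
        ← mul_assoc]
      refine mul_le_mul_of_nonneg_left (pow_le_pow_left₀ (hr_pos j).le h1 _) ?_
      exact mul_nonneg (abs_nonneg _) (pow_nonneg (hr_pos j).le _)
    have hczero : ∀ n : ℕ, N ≤ n → ∑' j : ℕ, c j * r j ^ n = 0 := by
      intro n hn
      have hds : ∑' j, d j * r j ^ n = e := by
        have : (fun j => d j * r j ^ n) = fun j => if j = 0 then e * r 0 ^ n else 0 := by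
          funext j; by_cases hj : j = 0 <;> simp [hd, hj]
        rw [this]
        have := tsum_ite_eq (0 : ℕ) (fun _ => e * r 0 ^ n)
        rw [show (fun j : ℕ => if j = 0 then e * r 0 ^ n else 0)
            = fun j : ℕ => if j = (0:ℕ) then e * r 0 ^ n else 0 from rfl, this,
          hr0, one_pow, mul_one]
      have hsplit : (fun j => c j * r j ^ n)
          = fun j => b j * r j ^ n - d j * r j ^ n := by
        funext j; rw [hc]; ring
      rw [hsplit, Summable.tsum_sub (hbsum_n n hn) (hdsum_n n), he n hn, hds, sub_self]
    have hcall : ∀ j, c j = 0 :=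
      dirichlet_vanish_aux r c N hr_anti hr_pos hcsum hczero
    constructor
    · have := hcall 0
      simp only [hc, hd] at this
      simpa [sub_eq_zero] using this
    · intro j hj
      have := hcall j
      have hjne : j ≠ 0 := by omega
      simpa [hc, hd, hjne] using this
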